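/- For every complex number z, the infinite product ∏_{n=1}^{∞} (1 + z/n)^n exp(−z + z²/(2n)) converges (where (1+z/n)^n is interpreted as 0 if z = −n for some n, and via the principal branch otherwise); consequently the Barnes G-function G(z+1) = (2π)^{z/2} exp(−((γ+1)z² + z)/2) ∏_{n=1}^{∞} (1 + z/n)^n exp(−z + z²/(2n)) is well defined for all z ∈ ℂ and satisfies G(1) = 1. -/

import Mathlib

noncomputable section

open Complex

/-- The `n`-th factor (`n ≥ 1`) of the infinite product defining the Barnes G-function:
`(1 + z/n)^n exp(−z + z²/(2n))`.  Since the exponent is a natural number, `(1 + z/n)^n`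
is automatically `0` when `z = -n` and needs no branch choice otherwise. -/
def barnesFactor (z : ℂ) (n : ℕ) : ℂ :=
  (1 + z / ((n : ℂ) + 1)) ^ (n + 1) * Complex.exp (-z + z ^ 2 / (2 * ((n : ℂ) + 1)))

/-- The Barnes G-function, defined by
`G(z+1) = (2π)^{z/2} exp(−((γ+1)z² + z)/2) ∏_{n=1}^{∞} (1 + z/n)^n exp(−z + z²/(2n))`,
with principal-branch complex powers. -/
def BarnesG (w : ℂ) : ℂ :=
  (2 * (Real.pi : ℂ)) ^ ((w - 1) / 2) *
    Complex.exp (-(((Real.eulerMascheroniConstant + 1) * (w - 1) ^ 2 + (w - 1)) / 2)) *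
    ∏' n : ℕ, barnesFactor (w - 1) n

private lemma hasProd_zero_of_zero {f : ℕ → ℂ} {k : ℕ} (hk : f k = 0) : HasProd f 0 := by
  have h : ∀ᶠ s : Finset ℕ in Filter.atTop, ∏ n ∈ s, f n = (0 : ℂ) := by
    filter_upwards [Filter.eventually_ge_atTop ({k} : Finset ℕ)] with s hs
    exact Finset.prod_eq_zero (hs (Finset.mem_singleton_self k)) hk
  exact tendsto_const_nhds.congr' (by filter_upwards [h] with s hs using hs.symm)

private lemma cubic_bound {w : ℂ} (hw : ‖w‖ ≤ 1 / 2) :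
    ‖Complex.log (1 + w) - w + w ^ 2 / 2‖ ≤ 2 / 3 * ‖w‖ ^ 3 := by
  have h1 : ‖w‖ < 1 := lt_of_le_of_lt hw (by norm_num)
  have h2 := Complex.norm_log_sub_logTaylor_le 2 h1
  have h3 : Complex.logTaylor 3 w = w - w ^ 2 / 2 := by
    simp [Complex.logTaylor, Finset.sum_range_succ]
    ring
  rw [h3] at h2
  have h4 : Complex.log (1 + w) - w + w ^ 2 / 2 = Complex.log (1 + w) - (w - w ^ 2 / 2) := by ring
  rw [h4]
  refine h2.trans ?_
  have h5 : (1 - ‖w‖)⁻¹ ≤ 2 := by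
    rw [inv_le_comm₀ (by linarith) (by norm_num)]
    linarith
  have h6 : (0:ℝ) ≤ ‖w‖ ^ 3 := by positivity
  norm_num
  nlinarith [mul_le_mul_of_nonneg_left h5 h6]

private lemma multipliable_barnes (z : ℂ) : Multipliable (fun n : ℕ => barnesFactor z n) := by
  by_cases hz : ∃ n : ℕ, (1 : ℂ) + z / ((n : ℂ) + 1) = 0
  · obtain ⟨k, hk⟩ := hz
    refine ⟨0, hasProd_zero_of_zero (k := k) ?_⟩
    simp [barnesFactor, hk]
  · push_neg at hz
    have hne : ∀ n : ℕ, barnesFactor z n ≠ 0 := fun n =>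
      mul_ne_zero (pow_ne_zero _ (hz n)) (Complex.exp_ne_zero _)
    set N : ℕ := ⌈max (2 * ‖z‖) (‖z‖ ^ 3)⌉₊ with hN
    have hNz : 2 * ‖z‖ ≤ N := (le_max_left _ _).trans (Nat.le_ceil _)
    have hNz3 : ‖z‖ ^ 3 ≤ N := (le_max_right _ _).trans (Nat.le_ceil _)
    -- main estimate for m ≥ N
    have key : ∀ m : ℕ, N ≤ m →
        ‖Complex.log (barnesFactor z m)‖ ≤ 2 / 3 * ‖z‖ ^ 3 / ((m : ℝ) + 1) ^ 2 := by
      intro m hm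
      have hm1 : (0:ℝ) < (m : ℝ) + 1 := by positivity
      have hmc : ((m : ℂ) + 1) ≠ 0 := by
        exact_mod_cast Nat.succ_ne_zero m
      have hNm : (N : ℝ) ≤ (m : ℝ) := by exact_mod_cast hm
      set w : ℂ := z / ((m : ℂ) + 1) with hw
      have hwn : ‖w‖ = ‖z‖ / ((m : ℝ) + 1) := by
        rw [hw, norm_div]
        congr 1
        rw [show ((m : ℂ) + 1) = ((m + 1 : ℕ) : ℂ) by push_cast; ring, Complex.norm_natCast]
        push_cast; ring
      have hwhalf : ‖w‖ ≤ 1 / 2 := by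
        rw [hwn, div_le_iff₀ hm1]
        linarith
      set h : ℂ := ((m : ℂ) + 1) * (Complex.log (1 + w) - w + w ^ 2 / 2) with hh
      have hnorm : ‖h‖ ≤ 2 / 3 * ‖z‖ ^ 3 / ((m : ℝ) + 1) ^ 2 := by
        rw [hh, norm_mul]
        have h1 : ‖(m : ℂ) + 1‖ = (m : ℝ) + 1 := by
          rw [show ((m : ℂ) + 1) = ((m + 1 : ℕ) : ℂ) by push_cast; ring, Complex.norm_natCast]
          push_cast; ring
        rw [h1]
        calc ((m : ℝ) + 1) * ‖Complex.log (1 + w) - w + w ^ 2 / 2‖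
            ≤ ((m : ℝ) + 1) * (2 / 3 * ‖w‖ ^ 3) := by
              gcongr; exact cubic_bound hwhalf
          _ = 2 / 3 * ‖z‖ ^ 3 / ((m : ℝ) + 1) ^ 2 := by
              rw [hwn]; field_simp
      have hsmall : ‖h‖ ≤ 2 / 3 := by
        refine hnorm.trans ?_
        rw [div_le_iff₀ (by positivity)]
        nlinarith [hNz3, hNm, hm1]
      have hfac : barnesFactor z m = Complex.exp h := by
        have hp : (1 + w) ^ (m + 1) = Complex.exp (((m : ℂ) + 1) * Complex.log (1 + w)) := by
          rw [show ((m : ℂ) + 1) = ((m + 1 : ℕ) : ℂ) by push_cast; ring,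
            Complex.exp_nat_mul, Complex.exp_log (hz m)]
        rw [barnesFactor, ← hw, hp, ← Complex.exp_add, hh]
        congr 1
        rw [hw]
        field_simp
        ring
      have him : |h.im| ≤ ‖h‖ := Complex.abs_im_le_norm h
      have hpi := Real.pi_gt_three
      rw [hfac, Complex.log_exp (by cases abs_le.mp him; linarith)
        (by cases abs_le.mp him; linarith)]
      exact hnorm
    -- summability of the logs
    have hsum : Summable (fun n : ℕ => Complex.log (barnesFactor z n)) := by
      rw [← summable_nat_add_iff N]
      have hS : Summable (fun n : ℕ => 2 / 3 * ‖z‖ ^ 3 / ((n : ℝ) + 1) ^ 2) := by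
        have := (Real.summable_one_div_nat_pow (p := 2)).mpr one_lt_two
        have h2 := (summable_nat_add_iff 1).mpr this
        refine (h2.mul_left (2 / 3 * ‖z‖ ^ 3)).congr fun n => ?_
        push_cast
        ring
      refine Summable.of_norm_bounded hS fun n => ?_
      refine (key (n + N) (Nat.le_add_left N n)).trans ?_
      have hle : ((n:ℝ) + 1) ^ 2 ≤ ((((n + N : ℕ)):ℝ) + 1) ^ 2 := by
        have : (0:ℝ) ≤ N := Nat.cast_nonneg N
        push_cast
        nlinarith [Nat.cast_nonneg (α := ℝ) n]
      exact div_le_div_of_nonneg_left (by positivity) (by positivity) hle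
    have hp := hsum.hasSum.cexp
    exact hp.multipliable.congr fun n => Complex.exp_log (hne n)

/-- for every `z ∈ ℂ` the product `∏_{n=1}^{∞} (1 + z/n)^n exp(−z + z²/(2n))`
converges, so the Barnes G-function is well defined on all of `ℂ`; moreover `G(1) = 1`. -/
theorem barnesG_welldefined :
    (∀ z : ℂ, Multipliable (fun n : ℕ => barnesFactor z n)) ∧ BarnesG 1 = 1 := by

  refine ⟨multipliable_barnes, ?_⟩
  have h0 : ∀ n : ℕ, barnesFactor 0 n = 1 := fun n => by simp [barnesFactor]
  simp [BarnesG, h0, tprod_one]
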